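/- For every instance of the Budget Optimization problem there exists a uniform strategy A with spend(A) ≤ B and traffic(A) ≥ (1 − 1/e)·OPT, where OPT is the per-query optimum; in particular the best uniform strategy is a (1 − 1/e)-approximation to the optimum of the Budget Optimization problem. -/

import Mathlib

open MeasureTheory

/-!
Budget Optimization instances.  A query landscape for query `q` has `S q + 1`
positions with click-through rates `α q 0 ≥ … ≥ α q (S q) = 0` and competing
bids `b q 0 ≥ … ≥ b q (S q) = 0`.  Keywords are `Fin nK`, queries `Fin nQ`,
and `nbrs q` is the (nonempty) set of keywords matching query `q`.
-/

noncomputable def landPos (n : ℕ) (b : Fin (n + 1) → ℝ) (x : ℝ) : Fin (n + 1) :=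
  if h : (Finset.univ.filter (fun i => b i ≤ x)).Nonempty
  then (Finset.univ.filter (fun i => b i ≤ x)).min' h
  else Fin.last n

noncomputable def landClicks (n : ℕ) (α b : Fin (n + 1) → ℝ) (x : ℝ) : ℝ :=
  α (landPos n b x)

noncomputable def landCost (n : ℕ) (α b : Fin (n + 1) → ℝ) (x : ℝ) : ℝ :=
  α (landPos n b x) * b (landPos n b x)

/-- An instance of the Budget Optimization problem. -/
structure BOInstance where
  nK : ℕ
  nQ : ℕ
  nbrs : Fin nQ → Finset (Fin nK)
  nbrs_nonempty : ∀ q, (nbrs q).Nonempty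
  S : Fin nQ → ℕ
  α : (q : Fin nQ) → Fin (S q + 1) → ℝ
  b : (q : Fin nQ) → Fin (S q + 1) → ℝ
  α_anti : ∀ q, Antitone (α q)
  b_anti : ∀ q, Antitone (b q)
  α_last : ∀ q, α q (Fin.last (S q)) = 0
  b_last : ∀ q, b q (Fin.last (S q)) = 0
  budget : ℝ
  budget_nonneg : 0 ≤ budget

/-- The effective bid on query `q` induced by the keyword-bid vector `v`. -/
noncomputable def effBid (I : BOInstance) (v : Fin I.nK → ℝ) (q : Fin I.nQ) : ℝ :=
  (I.nbrs q).sup' (I.nbrs_nonempty q) v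

noncomputable def spendVec (I : BOInstance) (v : Fin I.nK → ℝ) : ℝ :=
  ∑ q, landCost (I.S q) (I.α q) (I.b q) (effBid I v q)

noncomputable def trafficVec (I : BOInstance) (v : Fin I.nK → ℝ) : ℝ :=
  ∑ q, landClicks (I.S q) (I.α q) (I.b q) (effBid I v q)

/-- Expected spend of a distribution over keyword-bid vectors. -/
noncomputable def spendD (I : BOInstance) (μ : Measure (Fin I.nK → ℝ)) : ℝ :=
  ∫ v, spendVec I v ∂μ

/-- Expected traffic of a distribution over keyword-bid vectors. -/
noncomputable def trafficD (I : BOInstance) (μ : Measure (Fin I.nK → ℝ)) : ℝ :=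
  ∫ v, trafficVec I v ∂μ

/-- A strategy: a probability distribution over nonnegative keyword-bid vectors. -/
def IsStrategy (I : BOInstance) (μ : Measure (Fin I.nK → ℝ)) : Prop :=
  IsProbabilityMeasure μ ∧ ∀ᵐ v ∂μ, ∀ k, 0 ≤ v k

/-- A uniform strategy: supported on constant (uniform) bid vectors. -/
def IsUniform (I : BOInstance) (μ : Measure (Fin I.nK → ℝ)) : Prop :=
  IsStrategy I μ ∧ ∀ᵐ v ∂μ, ∃ x : ℝ, 0 ≤ x ∧ v = fun _ => x

/-- A two-bid strategy: a uniform strategy supported on at most two bid vectors. -/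
def IsTwoBid (I : BOInstance) (μ : Measure (Fin I.nK → ℝ)) : Prop :=
  ∃ x y l : ℝ, 0 ≤ x ∧ 0 ≤ y ∧ 0 ≤ l ∧ l ≤ 1 ∧
    μ = ENNReal.ofReal l • Measure.dirac (fun _ => x) +
        ENNReal.ofReal (1 - l) • Measure.dirac (fun _ => y)

/-- A single-bid strategy: a uniform strategy supported on at most one nonzero
bid vector together possibly with the zero vector. -/
def IsSingleBid (I : BOInstance) (μ : Measure (Fin I.nK → ℝ)) : Prop :=
  ∃ x l : ℝ, 0 ≤ x ∧ 0 ≤ l ∧ l ≤ 1 ∧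
    μ = ENNReal.ofReal l • Measure.dirac (fun _ => x) +
        ENNReal.ofReal (1 - l) • Measure.dirac (fun _ => (0 : ℝ))

section Land

variable {n : ℕ} {α b : Fin (n + 1) → ℝ}

lemma b_nonneg (hb : Antitone b) (hb0 : b (Fin.last n) = 0) (i : Fin (n + 1)) : 0 ≤ b i := by
  rw [← hb0]; exact hb (Fin.le_last i)

lemma alpha_nonneg (ha : Antitone α) (ha0 : α (Fin.last n) = 0) (i : Fin (n + 1)) : 0 ≤ α i := by
  rw [← ha0]; exact ha (Fin.le_last i)

lemma filter_nonempty_of_nonneg (hb0 : b (Fin.last n) = 0) {x : ℝ} (hx : 0 ≤ x) :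
    (Finset.univ.filter (fun i => b i ≤ x)).Nonempty :=
  ⟨Fin.last n, by simp [hb0, hx]⟩

lemma landPos_eq (hb0 : b (Fin.last n) = 0) {x : ℝ} (hx : 0 ≤ x) :
    landPos n b x = (Finset.univ.filter (fun i => b i ≤ x)).min'
      (filter_nonempty_of_nonneg hb0 hx) := by
  rw [landPos, dif_pos (filter_nonempty_of_nonneg hb0 hx)]

lemma landPos_b_le (hb0 : b (Fin.last n) = 0) {x : ℝ} (hx : 0 ≤ x) :
    b (landPos n b x) ≤ x := by
  rw [landPos_eq hb0 hx]
  have := Finset.min'_mem (Finset.univ.filter (fun i => b i ≤ x))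
    (filter_nonempty_of_nonneg hb0 hx)
  simpa using this

lemma landPos_le {x : ℝ} {i : Fin (n + 1)} (h : b i ≤ x) :
    landPos n b x ≤ i := by
  have hne : (Finset.univ.filter (fun j => b j ≤ x)).Nonempty := ⟨i, by simp [h]⟩
  rw [landPos, dif_pos hne]
  exact Finset.min'_le _ _ (by simp [h])

lemma landClicks_nonneg (ha : Antitone α) (ha0 : α (Fin.last n) = 0) (x : ℝ) :
    0 ≤ landClicks n α b x := alpha_nonneg ha ha0 _

lemma landClicks_le (ha : Antitone α) (x : ℝ) :
    landClicks n α b x ≤ α 0 := ha (Fin.zero_le _)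

lemma landClicks_mono (ha : Antitone α) (ha0 : α (Fin.last n) = 0) :
    Monotone (landClicks n α b) := by
  intro x y hxy
  by_cases hx : (Finset.univ.filter (fun i => b i ≤ x)).Nonempty
  · have h1 : landPos n b y ≤ landPos n b x := by
      have hbx : b (landPos n b x) ≤ x := by
        rw [landPos, dif_pos hx]
        have := Finset.min'_mem (Finset.univ.filter (fun i => b i ≤ x)) hx
        simpa using this
      exact landPos_le (le_trans hbx hxy)
    exact ha h1
  · have : landPos n b x = Fin.last n := by rw [landPos, dif_neg hx]
    rw [landClicks, this, ha0]
    exact alpha_nonneg ha ha0 _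

lemma landCost_nonneg (ha : Antitone α) (ha0 : α (Fin.last n) = 0)
    (hb : Antitone b) (hb0 : b (Fin.last n) = 0) (x : ℝ) :
    0 ≤ landCost n α b x :=
  mul_nonneg (alpha_nonneg ha ha0 _) (b_nonneg hb hb0 _)

lemma landCost_le (ha : Antitone α) (ha0 : α (Fin.last n) = 0)
    (hb : Antitone b) (hb0 : b (Fin.last n) = 0) (x : ℝ) :
    landCost n α b x ≤ α 0 * b 0 :=
  mul_le_mul (ha (Fin.zero_le _)) (hb (Fin.zero_le _)) (b_nonneg hb hb0 _)
    (alpha_nonneg ha ha0 0)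

lemma landCost_le_mul (ha : Antitone α) (ha0 : α (Fin.last n) = 0)
    (hb0 : b (Fin.last n) = 0) {x : ℝ} (hx : 0 ≤ x) :
    landCost n α b x ≤ landClicks n α b x * x :=
  mul_le_mul_of_nonneg_left (landPos_b_le hb0 hx) (alpha_nonneg ha ha0 _)

lemma landCost_nonpos (ha0 : α (Fin.last n) = 0) (hb : Antitone b)
    (hb0 : b (Fin.last n) = 0) {x : ℝ} (hx : x ≤ 0) :
    landCost n α b x = 0 := by
  rcases lt_or_eq_of_le hx with hx' | hx'
  · have hempty : ¬ (Finset.univ.filter (fun i => b i ≤ x)).Nonempty := by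
      rintro ⟨i, hi⟩
      simp only [Finset.mem_filter] at hi
      exact absurd (le_trans (b_nonneg hb hb0 i) hi.2) (not_le.mpr hx')
    rw [landCost, landPos, dif_neg hempty, hb0, mul_zero]
  · subst hx'
    have h1 : b (landPos n b (0:ℝ)) ≤ 0 := landPos_b_le hb0 le_rfl
    have h2 : 0 ≤ b (landPos n b (0:ℝ)) := b_nonneg hb hb0 _
    rw [landCost, le_antisymm h1 h2, mul_zero]

lemma landCost_mono (ha : Antitone α) (ha0 : α (Fin.last n) = 0)
    (hb : Antitone b) (hb0 : b (Fin.last n) = 0) :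
    Monotone (landCost n α b) := by
  intro x y hxy
  by_cases hx : (Finset.univ.filter (fun i => b i ≤ x)).Nonempty
  · have h1 : landPos n b y ≤ landPos n b x := by
      have hbx : b (landPos n b x) ≤ x := by
        rw [landPos, dif_pos hx]
        have := Finset.min'_mem (Finset.univ.filter (fun i => b i ≤ x)) hx
        simpa using this
      exact landPos_le (le_trans hbx hxy)
    exact mul_le_mul (ha h1) (hb h1) (b_nonneg hb hb0 _) (alpha_nonneg ha ha0 _)
  · have : landPos n b x = Fin.last n := by rw [landPos, dif_neg hx]
    rw [landCost, this, hb0, mul_zero]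
    exact landCost_nonneg ha ha0 hb hb0 _

/-- Key comparison: if a bid `t` at least matches the competing bid at the position
obtained by bid `β`, then bid `t` gets at least as many clicks. -/
lemma landClicks_key (ha : Antitone α) {β t : ℝ} (ht : b (landPos n b β) ≤ t) :
    landClicks n α b β ≤ landClicks n α b t :=
  ha (landPos_le ht)

/-- `landPos` is locally constant to the right. -/
lemma landPos_right_const (b : Fin (n + 1) → ℝ) (x : ℝ) :
    ∃ δ > 0, ∀ y, x ≤ y → y < x + δ → landPos n b y = landPos n b x := by
  classical
  set F := Finset.univ.filter (fun i => x < b i) with hF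
  by_cases hFne : F.Nonempty
  · refine ⟨F.inf' hFne b - x, ?_, ?_⟩
    · have : x < F.inf' hFne b := by
        rw [Finset.lt_inf'_iff]
        intro i hi
        simpa [hF] using hi
      linarith
    · intro y hxy hyδ
      have hfilter : Finset.univ.filter (fun i => b i ≤ y)
          = Finset.univ.filter (fun i => b i ≤ x) := by
        ext i
        simp only [Finset.mem_filter, Finset.mem_univ, true_and]
        constructor
        · intro hiy
          by_contra hix
          push_neg at hix
          have : F.inf' hFne b ≤ b i := Finset.inf'_le _ (by simp [hF, hix])
          linarith
        · intro hix; linarith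
      rw [landPos, landPos, hfilter]
  · have hall : ∀ i, b i ≤ x := by
      intro i
      by_contra h
      exact hFne ⟨i, by simp [hF, not_le.mp h]⟩
    refine ⟨1, one_pos, ?_⟩
    intro y hxy _
    have hfilter : Finset.univ.filter (fun i => b i ≤ y)
        = Finset.univ.filter (fun i => b i ≤ x) := by
      ext i
      simp only [Finset.mem_filter, Finset.mem_univ, true_and]
      exact ⟨fun _ => hall i, fun h => le_trans h hxy⟩
    rw [landPos, landPos, hfilter]

end Land
section Curves

variable (I : BOInstance)

noncomputable def kfun (x : ℝ) : ℝ := ∑ q, landClicks (I.S q) (I.α q) (I.b q) x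

noncomputable def cofun (x : ℝ) : ℝ := ∑ q, landCost (I.S q) (I.α q) (I.b q) x

noncomputable def CmaxI : ℝ := ∑ q, I.α q 0

noncomputable def MI : ℝ := ∑ q, ∑ i, I.b q i

noncomputable def ufun (s : ℝ) : ℝ :=
  sInf {t : ℝ | 0 ≤ t ∧ (s ≤ kfun I t ∨ MI I ≤ t)}

variable {I}

lemma kfun_mono : Monotone (kfun I) := fun x y hxy =>
  Finset.sum_le_sum fun q _ => landClicks_mono (I.α_anti q) (I.α_last q) hxy

lemma kfun_nonneg (x : ℝ) : 0 ≤ kfun I x :=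
  Finset.sum_nonneg fun q _ => landClicks_nonneg (I.α_anti q) (I.α_last q) x

lemma kfun_le_Cmax (x : ℝ) : kfun I x ≤ CmaxI I :=
  Finset.sum_le_sum fun q _ => landClicks_le (I.α_anti q) x

lemma Cmax_nonneg : 0 ≤ CmaxI I :=
  Finset.sum_nonneg fun q _ => alpha_nonneg (I.α_anti q) (I.α_last q) 0

lemma cofun_mono : Monotone (cofun I) := fun x y hxy =>
  Finset.sum_le_sum fun q _ =>
    landCost_mono (I.α_anti q) (I.α_last q) (I.b_anti q) (I.b_last q) hxy

lemma cofun_nonneg (x : ℝ) : 0 ≤ cofun I x :=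
  Finset.sum_nonneg fun q _ =>
    landCost_nonneg (I.α_anti q) (I.α_last q) (I.b_anti q) (I.b_last q) x

lemma cofun_nonpos {x : ℝ} (hx : x ≤ 0) : cofun I x = 0 :=
  Finset.sum_eq_zero fun q _ =>
    landCost_nonpos (I.α_last q) (I.b_anti q) (I.b_last q) hx

lemma cofun_le_mul {x : ℝ} (hx : 0 ≤ x) : cofun I x ≤ kfun I x * x := by
  rw [kfun, Finset.sum_mul]
  exact Finset.sum_le_sum fun q _ =>
    landCost_le_mul (I.α_anti q) (I.α_last q) (I.b_last q) hx

lemma MI_nonneg : 0 ≤ MI I :=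
  Finset.sum_nonneg fun q _ => Finset.sum_nonneg fun i _ =>
    b_nonneg (I.b_anti q) (I.b_last q) i

lemma b_le_MI (q : Fin I.nQ) (i : Fin (I.S q + 1)) : I.b q i ≤ MI I := by
  have h1 : I.b q i ≤ ∑ j, I.b q j :=
    Finset.single_le_sum (fun j _ => b_nonneg (I.b_anti q) (I.b_last q) j)
      (Finset.mem_univ i)
  refine le_trans h1 ?_
  show ∑ j, I.b q j ≤ ∑ q' : Fin I.nQ, ∑ j, I.b q' j
  exact Finset.single_le_sum (f := fun q' : Fin I.nQ => ∑ j, I.b q' j)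
    (fun q' _ => Finset.sum_nonneg fun j _ => b_nonneg (I.b_anti q') (I.b_last q') j)
    (Finset.mem_univ q)

lemma kfun_of_M_le {x : ℝ} (hx : MI I ≤ x) : kfun I x = CmaxI I := by
  refine Finset.sum_congr rfl fun q _ => ?_
  have h0 : landPos (I.S q) (I.b q) x = 0 := by
    have := landPos_le (b := I.b q) (le_trans (b_le_MI q 0) hx)
    exact le_antisymm this (Fin.zero_le _)
  rw [landClicks, h0]

lemma kfun_right_const (x : ℝ) :
    ∃ δ > 0, ∀ y, x ≤ y → y < x + δ → kfun I y = kfun I x := by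
  classical
  choose δ hδpos hδ using fun q : Fin I.nQ => landPos_right_const (I.b q) x
  by_cases hQ : Nonempty (Fin I.nQ)
  · have hne : (Finset.univ : Finset (Fin I.nQ)).Nonempty := Finset.univ_nonempty
    refine ⟨Finset.univ.inf' hne δ, ?_, ?_⟩
    · rw [gt_iff_lt, Finset.lt_inf'_iff]
      exact fun q _ => hδpos q
    · intro y hxy hy
      refine Finset.sum_congr rfl fun q _ => ?_
      have : y < x + δ q :=
        lt_of_lt_of_le hy (add_le_add (le_refl x) (Finset.inf'_le _ (Finset.mem_univ q)))
      rw [landClicks, landClicks, hδ q y hxy this]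
  · haveI : IsEmpty (Fin I.nQ) := not_nonempty_iff.mp hQ
    refine ⟨1, one_pos, fun y _ _ => ?_⟩
    rw [kfun, kfun, Finset.univ_eq_empty, Finset.sum_empty, Finset.sum_empty]

lemma M_mem_AA (s : ℝ) : MI I ∈ {t : ℝ | 0 ≤ t ∧ (s ≤ kfun I t ∨ MI I ≤ t)} :=
  ⟨MI_nonneg, Or.inr le_rfl⟩

lemma AA_nonempty (s : ℝ) : {t : ℝ | 0 ≤ t ∧ (s ≤ kfun I t ∨ MI I ≤ t)}.Nonempty :=
  ⟨MI I, M_mem_AA s⟩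

lemma AA_bddBelow (s : ℝ) : BddBelow {t : ℝ | 0 ≤ t ∧ (s ≤ kfun I t ∨ MI I ≤ t)} :=
  ⟨0, fun t ht => ht.1⟩

lemma ufun_nonneg (s : ℝ) : 0 ≤ ufun I s :=
  Real.sInf_nonneg fun t ht => ht.1

lemma ufun_le_M (s : ℝ) : ufun I s ≤ MI I :=
  csInf_le (AA_bddBelow s) (M_mem_AA s)

lemma ufun_mono : Monotone (ufun I) := by
  intro s s' hss'
  refine csInf_le_csInf (AA_bddBelow s) (AA_nonempty s') ?_
  rintro t ⟨ht0, ht⟩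
  exact ⟨ht0, ht.imp (fun h => le_trans hss' h) id⟩

lemma kfun_ge_of_mem {s t : ℝ} (hsC : s ≤ CmaxI I)
    (ht : t ∈ {t : ℝ | 0 ≤ t ∧ (s ≤ kfun I t ∨ MI I ≤ t)}) : s ≤ kfun I t := by
  rcases ht.2 with h | h
  · exact h
  · rw [← kfun_of_M_le (le_refl (MI I))] at hsC
    exact le_trans hsC (kfun_mono h)

lemma le_kfun_ufun {s : ℝ} (hsC : s ≤ CmaxI I) : s ≤ kfun I (ufun I s) := by
  obtain ⟨δ, hδ0, hδ⟩ := kfun_right_const (I := I) (ufun I s)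
  obtain ⟨t, htmem, htlt⟩ := Real.lt_sInf_add_pos (AA_nonempty (I := I) s) hδ0
  have hge : ufun I s ≤ t := csInf_le (AA_bddBelow s) htmem
  have : kfun I t = kfun I (ufun I s) := hδ t hge htlt
  rw [← this]
  exact kfun_ge_of_mem hsC htmem

lemma ufun_le_iff {s t : ℝ} (hsC : s ≤ CmaxI I) (ht : 0 ≤ t) :
    ufun I s ≤ t ↔ s ≤ kfun I t := by
  constructor
  · intro h
    exact le_trans (le_kfun_ufun hsC) (kfun_mono h)
  · intro h
    exact csInf_le (AA_bddBelow s) ⟨ht, Or.inl h⟩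

lemma lt_ufun_iff {s t : ℝ} (hsC : s ≤ CmaxI I) (ht : 0 ≤ t) :
    t < ufun I s ↔ kfun I t < s := by
  rw [← not_le, ← not_le, ufun_le_iff hsC ht]

end Curves
section PhiSec

variable {I : BOInstance}

noncomputable def Wfun (I : BOInstance) (β : Fin I.nQ → ℝ) : ℝ :=
  ∑ q, landClicks (I.S q) (I.α q) (I.b q) (β q)

noncomputable def Costfun (I : BOInstance) (β : Fin I.nQ → ℝ) : ℝ :=
  ∑ q, landCost (I.S q) (I.α q) (I.b q) (β q)

noncomputable def CoMaxI (I : BOInstance) : ℝ := ∑ q, I.α q 0 * I.b q 0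

noncomputable def Phi (I : BOInstance) (c : ℝ) : ℝ := ∫ s in Set.Ioc (0:ℝ) c, ufun I s

lemma Wfun_nonneg (β : Fin I.nQ → ℝ) : 0 ≤ Wfun I β :=
  Finset.sum_nonneg fun q _ => landClicks_nonneg (I.α_anti q) (I.α_last q) _

lemma Wfun_le_Cmax (β : Fin I.nQ → ℝ) : Wfun I β ≤ CmaxI I :=
  Finset.sum_le_sum fun q _ => landClicks_le (I.α_anti q) _

lemma Costfun_nonneg (β : Fin I.nQ → ℝ) : 0 ≤ Costfun I β :=
  Finset.sum_nonneg fun q _ =>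
    landCost_nonneg (I.α_anti q) (I.α_last q) (I.b_anti q) (I.b_last q) _

lemma Costfun_le (β : Fin I.nQ → ℝ) : Costfun I β ≤ CoMaxI I :=
  Finset.sum_le_sum fun q _ =>
    landCost_le (I.α_anti q) (I.α_last q) (I.b_anti q) (I.b_last q) _

lemma Wfun_measurable : Measurable (Wfun I) :=
  Finset.measurable_sum _ fun q _ =>
    ((landClicks_mono (I.α_anti q) (I.α_last q)).measurable).comp (measurable_pi_apply q)

lemma Costfun_measurable : Measurable (Costfun I) :=
  Finset.measurable_sum _ fun q _ =>
    ((landCost_mono (I.α_anti q) (I.α_last q) (I.b_anti q) (I.b_last q)).measurable).comp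
      (measurable_pi_apply q)

lemma effBid_measurable (q : Fin I.nQ) : Measurable (fun v => effBid I v q) := by
  have heq : (fun v => effBid I v q)
      = ((I.nbrs q).sup' (I.nbrs_nonempty q) fun k (v : Fin I.nK → ℝ) => v k) := by
    funext v
    rw [Finset.sup'_apply]
    rfl
  rw [heq]
  exact Finset.measurable_sup' (I.nbrs_nonempty q) fun k _ => measurable_pi_apply k

lemma spendVec_measurable : Measurable (spendVec I) :=
  Finset.measurable_sum _ fun q _ =>
    ((landCost_mono (I.α_anti q) (I.α_last q) (I.b_anti q) (I.b_last q)).measurable).comp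
      (effBid_measurable q)

lemma trafficVec_measurable : Measurable (trafficVec I) :=
  Finset.measurable_sum _ fun q _ =>
    ((landClicks_mono (I.α_anti q) (I.α_last q)).measurable).comp (effBid_measurable q)

lemma spendVec_nonneg (v : Fin I.nK → ℝ) : 0 ≤ spendVec I v :=
  Finset.sum_nonneg fun q _ =>
    landCost_nonneg (I.α_anti q) (I.α_last q) (I.b_anti q) (I.b_last q) _

lemma spendVec_le (v : Fin I.nK → ℝ) : spendVec I v ≤ CoMaxI I :=
  Finset.sum_le_sum fun q _ =>
    landCost_le (I.α_anti q) (I.α_last q) (I.b_anti q) (I.b_last q) _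

lemma trafficVec_nonneg (v : Fin I.nK → ℝ) : 0 ≤ trafficVec I v :=
  Finset.sum_nonneg fun q _ => landClicks_nonneg (I.α_anti q) (I.α_last q) _

lemma trafficVec_le (v : Fin I.nK → ℝ) : trafficVec I v ≤ CmaxI I :=
  Finset.sum_le_sum fun q _ => landClicks_le (I.α_anti q) _

lemma effBid_const (x : ℝ) (q : Fin I.nQ) : effBid I (fun _ => x) q = x :=
  Finset.sup'_const (I.nbrs_nonempty q) x

lemma spendVec_const (x : ℝ) : spendVec I (fun _ => x) = cofun I x :=
  Finset.sum_congr rfl fun q _ => by rw [effBid_const]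

lemma trafficVec_const (x : ℝ) : trafficVec I (fun _ => x) = kfun I x :=
  Finset.sum_congr rfl fun q _ => by rw [effBid_const]

instance ioc_finite (a c : ℝ) : IsFiniteMeasure (volume.restrict (Set.Ioc a c)) :=
  ⟨by rw [Measure.restrict_apply_univ]; exact measure_Ioc_lt_top⟩

lemma ufun_integrableOn (a c : ℝ) : IntegrableOn (ufun I) (Set.Ioc a c) := by
  refine Integrable.mono' (integrable_const (MI I))
    (ufun_mono.measurable.aestronglyMeasurable) (ae_of_all _ fun s => ?_)
  rw [Real.norm_eq_abs, abs_of_nonneg (ufun_nonneg s)]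
  exact ufun_le_M s

lemma CoMax_nonneg : 0 ≤ CoMaxI I :=
  Finset.sum_nonneg fun q _ => mul_nonneg (alpha_nonneg (I.α_anti q) (I.α_last q) 0)
    (b_nonneg (I.b_anti q) (I.b_last q) 0)

lemma Phi_nonneg (c : ℝ) : 0 ≤ Phi I c :=
  setIntegral_nonneg measurableSet_Ioc fun s _ => ufun_nonneg s

lemma Phi_mono : Monotone (Phi I) := by
  intro a c hac
  refine setIntegral_mono_set (ufun_integrableOn 0 c)
    (ae_of_all _ fun s => ufun_nonneg s) (HasSubset.Subset.eventuallyLE ?_)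
  exact Set.Ioc_subset_Ioc le_rfl hac

lemma Phi_le (c : ℝ) : Phi I c ≤ MI I * max c 0 := by
  have h1 : Phi I c ≤ ∫ _ in Set.Ioc (0:ℝ) c, MI I := by
    refine setIntegral_mono_on (ufun_integrableOn 0 c) ((integrableOn_const_iff).mpr ?_)
      measurableSet_Ioc fun s _ => ufun_le_M s
    exact Or.inr measure_Ioc_lt_top
  rw [setIntegral_const] at h1
  refine le_trans h1 ?_
  rw [measureReal_def, Real.volume_Ioc, smul_eq_mul, mul_comm]
  rcases le_total c 0 with h | h
  · have : Set.Ioc (0:ℝ) c = ∅ := Set.Ioc_eq_empty (not_lt.mpr h)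
    have hez : ENNReal.ofReal (c - 0) = 0 := by
      rw [ENNReal.ofReal_eq_zero]; linarith
    rw [hez]
    simp only [ENNReal.toReal_zero, mul_zero]
    exact mul_nonneg MI_nonneg (le_max_right c 0)
  · rw [ENNReal.toReal_ofReal (by linarith), sub_zero, max_eq_left h]

lemma Phi_diff {a c : ℝ} (ha : 0 ≤ a) (hac : a ≤ c) :
    Phi I c - Phi I a = ∫ s in Set.Ioc a c, ufun I s := by
  have h := setIntegral_union (f := ufun I) (μ := volume) (Set.Ioc_disjoint_Ioc_of_le le_rfl)
    measurableSet_Ioc (ufun_integrableOn 0 a) (ufun_integrableOn a c)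
  rw [Set.Ioc_union_Ioc_eq_Ioc ha hac] at h
  rw [Phi, Phi, h]; ring

lemma Phi_subgrad {V W : ℝ} (hV : 0 ≤ V) (hW : 0 ≤ W) :
    Phi I V ≤ Phi I W + ufun I V * (V - W) := by
  rcases le_total W V with h | h
  · have hd := Phi_diff (I := I) hW h
    have : ∫ s in Set.Ioc W V, ufun I s ≤ ufun I V * (V - W) := by
      have h1 : ∫ s in Set.Ioc W V, ufun I s ≤ ∫ _ in Set.Ioc W V, ufun I V := by
        refine setIntegral_mono_on (ufun_integrableOn W V) ((integrableOn_const_iff).mpr ?_)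
          measurableSet_Ioc fun s hs => ufun_mono hs.2
        exact Or.inr measure_Ioc_lt_top
      rw [setIntegral_const, measureReal_def, Real.volume_Ioc, smul_eq_mul,
        ENNReal.toReal_ofReal (by linarith)] at h1
      linarith [h1]
    linarith [hd, this]
  · have hd := Phi_diff (I := I) hV h
    have : ufun I V * (W - V) ≤ ∫ s in Set.Ioc V W, ufun I s := by
      have h1 : ∫ _ in Set.Ioc V W, ufun I V ≤ ∫ s in Set.Ioc V W, ufun I s := by
        refine setIntegral_mono_on ((integrableOn_const_iff).mpr ?_) (ufun_integrableOn V W)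
          measurableSet_Ioc fun s hs => ufun_mono (le_of_lt hs.1)
        exact Or.inr measure_Ioc_lt_top
      rw [setIntegral_const, measureReal_def, Real.volume_Ioc, smul_eq_mul,
        ENNReal.toReal_ofReal (by linarith)] at h1
      linarith [h1]
    linarith [hd, this]

end PhiSec
section Pointwise

open Set

variable {I : BOInstance}

/-- Deterministic key lemma: any single per-query bid tuple obtaining `W` clicks
must pay at least `∫_0^W ufun`. -/
lemma Phi_le_Cost (β : Fin I.nQ → ℝ) : Phi I (Wfun I β) ≤ Costfun I β := by
  classical
  set W := Wfun I β with hWdef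
  have hW0 : 0 ≤ W := Wfun_nonneg β
  have hWC : W ≤ CmaxI I := Wfun_le_Cmax β
  have hCost0 : 0 ≤ Costfun I β := Costfun_nonneg β
  -- competing bid at the position obtained by `β q`
  set pb : Fin I.nQ → ℝ := fun q => I.b q (landPos (I.S q) (I.b q) (β q)) with hpb
  set kq : Fin I.nQ → ℝ := fun q => landClicks (I.S q) (I.α q) (I.b q) (β q) with hkq
  have hkq0 : ∀ q, 0 ≤ kq q := fun q => landClicks_nonneg (I.α_anti q) (I.α_last q) _
  have hpb0 : ∀ q, 0 ≤ pb q := fun q => b_nonneg (I.b_anti q) (I.b_last q) _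
  have hCost : Costfun I β = ∑ q, kq q * pb q := rfl
  -- the comparison function of t
  set G : ℝ → ℝ := fun t => ∑ q, kq q * (if t < pb q then 1 else 0) with hG
  have hGmeas : Measurable fun t => ENNReal.ofReal (G t) := by
    refine Measurable.ennreal_ofReal ?_
    refine Finset.measurable_sum _ fun q _ => ?_
    refine Measurable.const_mul ?_ _
    exact (measurable_const.ite measurableSet_Iio measurable_const)
  have h1 : ENNReal.ofReal (Phi I W) = ∫⁻ s in Ioc (0:ℝ) W, ENNReal.ofReal (ufun I s) :=
    ofReal_integral_eq_lintegral_ofReal (ufun_integrableOn 0 W)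
      (ae_of_all _ fun s => ufun_nonneg s)
  have h2 : ∫⁻ s in Ioc (0:ℝ) W, ENNReal.ofReal (ufun I s)
      = ∫⁻ t in Ioi (0:ℝ), (volume.restrict (Ioc (0:ℝ) W)) {s | t < ufun I s} :=
    lintegral_eq_lintegral_meas_lt _ (ae_of_all _ fun s => ufun_nonneg s)
      ufun_mono.measurable.aemeasurable
  have h3 : ∀ t ∈ Ioi (0:ℝ), (volume.restrict (Ioc (0:ℝ) W)) {s | t < ufun I s}
      ≤ ENNReal.ofReal (G t) := by
    intro t ht
    have ht0 : (0:ℝ) ≤ t := le_of_lt ht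
    rw [Measure.restrict_apply' measurableSet_Ioc]
    have hsub : {s | t < ufun I s} ∩ Ioc (0:ℝ) W ⊆ Ioc (kfun I t) W := by
      rintro s ⟨hts, hs0, hsW⟩
      refine ⟨?_, hsW⟩
      exact (lt_ufun_iff (le_trans hsW hWC) ht0).mp hts
    refine le_trans (measure_mono hsub) ?_
    rw [Real.volume_Ioc]
    refine ENNReal.ofReal_le_ofReal ?_
    -- W - kfun I t ≤ G t
    have hper : ∀ q, kq q * (1 - (if t < pb q then 1 else 0))
        ≤ landClicks (I.S q) (I.α q) (I.b q) t := by
      intro q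
      by_cases h : t < pb q
      · rw [if_pos h]
        simpa using landClicks_nonneg (I.α_anti q) (I.α_last q) t
      · rw [if_neg h]
        push_neg at h
        simpa using landClicks_key (I.α_anti q) h
    have hsum : ∑ q, kq q * (1 - (if t < pb q then 1 else 0)) ≤ kfun I t :=
      Finset.sum_le_sum fun q _ => hper q
    have hexpand : ∑ q, kq q * (1 - (if t < pb q then 1 else 0)) = W - G t := by
      rw [hG, hWdef, Wfun, ← Finset.sum_sub_distrib]
      refine Finset.sum_congr rfl fun q _ => ?_
      ring
    linarith [hsum, hexpand ▸ hsum]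
  have h4 : ∫⁻ t in Ioi (0:ℝ), ENNReal.ofReal (G t) = ENNReal.ofReal (Costfun I β) := by
    have hterm : ∀ q : Fin I.nQ,
        (∫⁻ t in Ioi (0:ℝ), ENNReal.ofReal (kq q * (if t < pb q then 1 else 0)))
          = ENNReal.ofReal (kq q * pb q) := by
      intro q
      have hind : (fun t => ENNReal.ofReal (kq q * (if t < pb q then 1 else 0)))
          = (Iio (pb q)).indicator (fun _ => ENNReal.ofReal (kq q)) := by
        funext t
        rw [Set.indicator_apply]
        by_cases h : t < pb q
        · rw [if_pos h, if_pos (Set.mem_Iio.mpr h), mul_one]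
        · rw [if_neg h, if_neg (fun hh => h (Set.mem_Iio.mp hh)), mul_zero,
            ENNReal.ofReal_zero]
      rw [hind]
      rw [show lintegral (volume.restrict (Ioi (0:ℝ)))
            ((Iio (pb q)).indicator fun _ => ENNReal.ofReal (kq q))
          = ∫⁻ t in Iio (pb q), ENNReal.ofReal (kq q) ∂(volume.restrict (Ioi (0:ℝ)))
        from lintegral_indicator measurableSet_Iio _]
      rw [setLIntegral_const,
        Measure.restrict_apply measurableSet_Iio, Set.Iio_inter_Ioi, Real.volume_Ioo,
        sub_zero, ← ENNReal.ofReal_mul (hkq0 q)]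
    have hsum : ∀ t, ENNReal.ofReal (G t)
        = ∑ q, ENNReal.ofReal (kq q * (if t < pb q then 1 else 0)) := by
      intro t
      rw [hG, ENNReal.ofReal_sum_of_nonneg]
      intro q _
      exact mul_nonneg (hkq0 q) (by split <;> norm_num)
    calc ∫⁻ t in Ioi (0:ℝ), ENNReal.ofReal (G t)
        = ∫⁻ t in Ioi (0:ℝ), ∑ q, ENNReal.ofReal (kq q * (if t < pb q then 1 else 0)) := by
          refine lintegral_congr fun t => hsum t
      _ = ∑ q, ∫⁻ t in Ioi (0:ℝ), ENNReal.ofReal (kq q * (if t < pb q then 1 else 0)) := by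
          refine lintegral_finset_sum _ fun q _ => ?_
          refine Measurable.ennreal_ofReal ?_
          exact Measurable.const_mul
            (measurable_const.ite measurableSet_Iio measurable_const) _
      _ = ∑ q, ENNReal.ofReal (kq q * pb q) := Finset.sum_congr rfl fun q _ => hterm q
      _ = ENNReal.ofReal (Costfun I β) := by
          rw [hCost, ENNReal.ofReal_sum_of_nonneg]
          intro q _
          exact mul_nonneg (hkq0 q) (hpb0 q)
  have hchain : ENNReal.ofReal (Phi I W) ≤ ENNReal.ofReal (Costfun I β) := by
    rw [h1, h2, ← h4]
    exact setLIntegral_mono hGmeas h3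
  exact (ENNReal.ofReal_le_ofReal_iff hCost0).mp hchain

end Pointwise
section NuSide

variable {I : BOInstance}

lemma integrable_of_bounded {X : Type*} [MeasurableSpace X] (μ : Measure X)
    [IsFiniteMeasure μ] {f : X → ℝ} (hf : Measurable f) (C : ℝ) (h : ∀ x, |f x| ≤ C) :
    Integrable f μ :=
  Integrable.mono' (integrable_const C) hf.aestronglyMeasurable
    (ae_of_all _ fun x => by rw [Real.norm_eq_abs]; exact h x)

lemma Wfun_integrable (ν : Measure (Fin I.nQ → ℝ)) [IsProbabilityMeasure ν] :
    Integrable (Wfun I) ν :=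
  integrable_of_bounded ν Wfun_measurable (CmaxI I)
    (fun β => abs_le.mpr ⟨by linarith [Wfun_nonneg (I := I) β, Cmax_nonneg (I := I)], Wfun_le_Cmax β⟩)

lemma Costfun_integrable (ν : Measure (Fin I.nQ → ℝ)) [IsProbabilityMeasure ν] :
    Integrable (Costfun I) ν :=
  integrable_of_bounded ν Costfun_measurable (CoMaxI I)
    (fun β => abs_le.mpr ⟨by linarith [Costfun_nonneg (I := I) β, CoMax_nonneg (I := I)], Costfun_le β⟩)

lemma PhiW_integrable (ν : Measure (Fin I.nQ → ℝ)) [IsProbabilityMeasure ν] :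
    Integrable (fun β => Phi I (Wfun I β)) ν := by
  refine integrable_of_bounded ν ((Phi_mono (I := I)).measurable.comp Wfun_measurable)
    (MI I * CmaxI I) (fun β => abs_le.mpr ⟨?_, ?_⟩)
  · have := Phi_nonneg (I := I) (Wfun I β)
    nlinarith [MI_nonneg (I := I), Cmax_nonneg (I := I)]
  · refine le_trans (Phi_le _) ?_
    have h1 : max (Wfun I β) 0 ≤ CmaxI I := max_le (Wfun_le_Cmax β) Cmax_nonneg
    exact mul_le_mul_of_nonneg_left h1 MI_nonneg

lemma Phi_V_le_budget (ν : Measure (Fin I.nQ → ℝ)) [hp : IsProbabilityMeasure ν]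
    (hcost : (∫ β, Costfun I β ∂ν) ≤ I.budget) :
    Phi I (∫ β, Wfun I β ∂ν) ≤ I.budget := by
  set V := ∫ β, Wfun I β ∂ν with hVdef
  have hV0 : 0 ≤ V := integral_nonneg fun β => Wfun_nonneg β
  have hintW : Integrable (Wfun I) ν := Wfun_integrable ν
  have hintPhi : Integrable (fun β => Phi I (Wfun I β)) ν := PhiW_integrable ν
  have hg : Integrable (fun β => ufun I V * (V - Wfun I β)) ν := by
    exact ((integrable_const V).sub hintW).const_mul _
  have hlin : Integrable (fun β => Phi I (Wfun I β) + ufun I V * (V - Wfun I β)) ν :=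
    hintPhi.add hg
  have h2 : Phi I V ≤ ∫ β, (Phi I (Wfun I β) + ufun I V * (V - Wfun I β)) ∂ν := by
    have hc : Phi I V = ∫ _, Phi I V ∂ν := by
      rw [integral_const, measureReal_def, measure_univ, ENNReal.toReal_one, one_smul]
    rw [hc]
    exact integral_mono (integrable_const _) hlin
      (fun β => Phi_subgrad hV0 (Wfun_nonneg β))
  have h3 : ∫ β, (Phi I (Wfun I β) + ufun I V * (V - Wfun I β)) ∂ν
      = ∫ β, Phi I (Wfun I β) ∂ν := by
    rw [integral_add hintPhi hg,
      integral_const_mul, integral_sub (integrable_const V) hintW,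
      integral_const, measureReal_def, measure_univ, ENNReal.toReal_one, one_smul, ← hVdef,
      sub_self, mul_zero, add_zero]
  have h4 : ∫ β, Phi I (Wfun I β) ∂ν ≤ ∫ β, Costfun I β ∂ν :=
    integral_mono hintPhi (Costfun_integrable ν) fun β => Phi_le_Cost β
  linarith

noncomputable def OPTset (I : BOInstance) : Set ℝ :=
  {x | ∃ ν : Measure (Fin I.nQ → ℝ), IsProbabilityMeasure ν ∧
      (∀ᵐ β ∂ν, ∀ q, 0 ≤ β q) ∧ (∫ β, Costfun I β ∂ν) ≤ I.budget ∧
      x = ∫ β, Wfun I β ∂ν}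

noncomputable def Vstar (I : BOInstance) : ℝ := sSup (OPTset I)

lemma zero_mem_OPTset : (Wfun I fun _ => (0:ℝ)) ∈ OPTset I := by
  refine ⟨Measure.dirac (fun _ => (0:ℝ)), inferInstance, ?_, ?_, ?_⟩
  · rw [ae_dirac_eq]
    exact Filter.eventually_pure.mpr fun q => le_rfl
  · rw [integral_dirac]
    have : Costfun I (fun _ => (0:ℝ)) = cofun I 0 := rfl
    rw [this, cofun_nonpos le_rfl]
    exact I.budget_nonneg
  · rw [integral_dirac]

lemma OPTset_nonempty : (OPTset I).Nonempty := ⟨_, zero_mem_OPTset⟩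

lemma OPTset_bddAbove : BddAbove (OPTset I) := by
  refine ⟨CmaxI I, ?_⟩
  rintro x ⟨ν, hν, _, _, rfl⟩
  have h1 : ∫ β, Wfun I β ∂ν ≤ ∫ _, CmaxI I ∂ν :=
    integral_mono (Wfun_integrable ν) (integrable_const _) fun β => Wfun_le_Cmax β
  rwa [integral_const, measureReal_def, measure_univ, ENNReal.toReal_one, one_smul] at h1

lemma Vstar_nonneg : 0 ≤ Vstar I := by
  refine le_trans ?_ (le_csSup OPTset_bddAbove zero_mem_OPTset)
  exact Wfun_nonneg _

lemma Vstar_le_Cmax : Vstar I ≤ CmaxI I := by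
  refine csSup_le OPTset_nonempty ?_
  rintro x ⟨ν, hν, _, _, rfl⟩
  have h1 : ∫ β, Wfun I β ∂ν ≤ ∫ _, CmaxI I ∂ν :=
    integral_mono (Wfun_integrable ν) (integrable_const _) fun β => Wfun_le_Cmax β
  rwa [integral_const, measureReal_def, measure_univ, ENNReal.toReal_one, one_smul] at h1

lemma Phi_lip {a c : ℝ} (ha : 0 ≤ a) (hac : a ≤ c) :
    Phi I c - Phi I a ≤ MI I * (c - a) := by
  rw [Phi_diff ha hac]
  have h1 : ∫ s in Set.Ioc a c, ufun I s ≤ ∫ _ in Set.Ioc a c, MI I := by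
    refine setIntegral_mono_on (ufun_integrableOn a c)
      ((integrableOn_const_iff).mpr (Or.inr measure_Ioc_lt_top)) measurableSet_Ioc
      fun s _ => ufun_le_M s
  rwa [setIntegral_const, measureReal_def, Real.volume_Ioc, smul_eq_mul,
    ENNReal.toReal_ofReal (by linarith), mul_comm] at h1

lemma Phi_Vstar_le_budget : Phi I (Vstar I) ≤ I.budget := by
  have key : ∀ ε, 0 < ε → ε ≤ Vstar I → Phi I (Vstar I) ≤ I.budget + MI I * ε := by
    intro ε hε0 hεV
    set c := Vstar I - ε with hcdef
    have hc0 : 0 ≤ c := by simp [hcdef]; linarith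
    have hcV : c < Vstar I := by simp [hcdef]; linarith
    obtain ⟨x, hx, hcx⟩ := exists_lt_of_lt_csSup OPTset_nonempty hcV
    obtain ⟨ν, hν, _, hcost, rfl⟩ := hx
    have h1 : Phi I c ≤ I.budget := by
      haveI := hν
      exact le_trans (Phi_mono (le_of_lt hcx)) (Phi_V_le_budget ν hcost)
    have h2 : Phi I (Vstar I) - Phi I c ≤ MI I * ε := by
      have := Phi_lip (I := I) hc0 (by linarith : c ≤ Vstar I)
      simpa [hcdef] using this
    linarith
  by_cases hV : Vstar I ≤ 0
  · have hV0 : Vstar I = 0 := le_antisymm hV Vstar_nonneg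
    have : Set.Ioc (0:ℝ) (Vstar I) = ∅ := by simp [hV0]
    rw [Phi, this]
    simpa using I.budget_nonneg
  · push_neg at hV
    by_contra hcon
    push_neg at hcon
    set d := Phi I (Vstar I) - I.budget with hd
    have hd0 : 0 < d := by simp [hd]; linarith
    have hM0 : 0 ≤ MI I := MI_nonneg
    set ε := min (Vstar I) (d / (MI I + 1)) with hε
    have hε0 : 0 < ε := lt_min hV (by positivity)
    have h1 := key ε hε0 (min_le_left _ _)
    have h2 : MI I * ε ≤ MI I * (d / (MI I + 1)) :=
      mul_le_mul_of_nonneg_left (min_le_right _ _) hM0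
    have h3 : MI I * (d / (MI I + 1)) < d := by
      rw [mul_div_assoc']
      rw [div_lt_iff₀ (by linarith)]
      nlinarith
    linarith

end NuSide
section Main

open Set
open scoped NNReal ENNReal

noncomputable def gI (I : BOInstance) (s : ℝ) : ℝ := (kfun I (ufun I s))⁻¹

noncomputable def aI (I : BOInstance) : ℝ := Vstar I / Real.exp 1

noncomputable def IsetI (I : BOInstance) : Set ℝ := Set.Ioc (aI I) (Vstar I)

noncomputable def rhoI (I : BOInstance) : Measure ℝ :=
  (volume.restrict (IsetI I)).withDensity (fun s => ENNReal.ofReal (gI I s))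

noncomputable def cvecI (I : BOInstance) : ℝ → (Fin I.nK → ℝ) := fun s _ => ufun I s

noncomputable def w0I (I : BOInstance) : ℝ := 1 - ∫ s in IsetI I, gI I s

noncomputable def muI (I : BOInstance) : Measure (Fin I.nK → ℝ) :=
  (rhoI I).map (cvecI I) + (ENNReal.ofReal (w0I I)) • Measure.dirac (fun _ => (0:ℝ))

variable {I : BOInstance}

lemma IsetI_meas : MeasurableSet (IsetI I) := measurableSet_Ioc

instance isetI_finite : IsFiniteMeasure (volume.restrict (IsetI I)) := ioc_finite _ _

lemma gI_meas : Measurable (gI I) :=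
  ((kfun_mono.comp ufun_mono).measurable).inv

lemma gI_nonneg (s : ℝ) : 0 ≤ gI I s := inv_nonneg.mpr (kfun_nonneg _)

lemma cvec_meas : Measurable (cvecI I) :=
  measurable_pi_lambda _ fun _ => ufun_mono.measurable

lemma aI_pos (hV : 0 < Vstar I) : 0 < aI I := div_pos hV (Real.exp_pos 1)

lemma aI_lt (hV : 0 < Vstar I) : aI I < Vstar I := by
  rw [aI, div_lt_iff₀ (Real.exp_pos 1)]
  nlinarith [Real.add_one_le_exp (1:ℝ)]

lemma kfun_ufun_pos (hV : 0 < Vstar I) {s : ℝ} (hs : s ∈ IsetI I) :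
    0 < s ∧ s ≤ kfun I (ufun I s) := by
  have hs0 : 0 < s := lt_trans (aI_pos hV) hs.1
  exact ⟨hs0, le_kfun_ufun (le_trans hs.2 Vstar_le_Cmax)⟩

lemma gI_le_inv (hV : 0 < Vstar I) {s : ℝ} (hs : s ∈ IsetI I) : gI I s ≤ s⁻¹ := by
  obtain ⟨hs0, hsk⟩ := kfun_ufun_pos hV hs
  exact inv_anti₀ hs0 hsk

lemma gI_le_ainv (hV : 0 < Vstar I) {s : ℝ} (hs : s ∈ IsetI I) : gI I s ≤ (aI I)⁻¹ := by
  refine le_trans (gI_le_inv hV hs) ?_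
  exact inv_anti₀ (aI_pos hV) (le_of_lt hs.1)

lemma gI_integrableOn (hV : 0 < Vstar I) : IntegrableOn (gI I) (IsetI I) := by
  refine Integrable.mono' (integrable_const ((aI I)⁻¹)) gI_meas.aestronglyMeasurable ?_
  refine (ae_restrict_iff' measurableSet_Ioc).mpr (ae_of_all _ fun s hs => ?_)
  rw [Real.norm_eq_abs, abs_of_nonneg (gI_nonneg s)]
  exact gI_le_ainv hV hs

lemma inv_integrableOn (hV : 0 < Vstar I) :
    IntegrableOn (fun s : ℝ => s⁻¹) (IsetI I) := by
  refine Integrable.mono' (integrable_const ((aI I)⁻¹))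
    measurable_inv.aestronglyMeasurable ?_
  refine (ae_restrict_iff' measurableSet_Ioc).mpr (ae_of_all _ fun s hs => ?_)
  have hs0 : 0 < s := lt_trans (aI_pos hV) hs.1
  rw [Real.norm_eq_abs, abs_of_nonneg (inv_nonneg.mpr (le_of_lt hs0))]
  exact inv_anti₀ (aI_pos hV) (le_of_lt hs.1)

lemma int_gI_le_one (hV : 0 < Vstar I) : ∫ s in IsetI I, gI I s ≤ 1 := by
  have h1 : ∫ s in IsetI I, gI I s ≤ ∫ s in IsetI I, s⁻¹ :=
    setIntegral_mono_on (gI_integrableOn hV) (inv_integrableOn hV)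
      measurableSet_Ioc fun s hs => gI_le_inv hV hs
  have h2 : ∫ s in IsetI I, (fun s : ℝ => s⁻¹) s = Real.log (Vstar I / aI I) := by
    rw [IsetI, ← intervalIntegral.integral_of_le (le_of_lt (aI_lt hV))]
    exact integral_inv_of_pos (aI_pos hV) hV
  have h3 : Vstar I / aI I = Real.exp 1 := by
    rw [aI]
    field_simp
  rw [h2, h3, Real.log_exp] at h1
  exact h1

lemma int_gI_nonneg : 0 ≤ ∫ s in IsetI I, gI I s :=
  setIntegral_nonneg measurableSet_Ioc fun s _ => gI_nonneg s

lemma w0_nonneg (hV : 0 < Vstar I) : 0 ≤ w0I I := by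
  rw [w0I]; linarith [int_gI_le_one hV]

lemma rho_univ (hV : 0 < Vstar I) :
    rhoI I Set.univ = ENNReal.ofReal (∫ s in IsetI I, gI I s) := by
  rw [rhoI, withDensity_apply _ MeasurableSet.univ, Measure.restrict_univ]
  exact (ofReal_integral_eq_lintegral_ofReal (gI_integrableOn hV)
    ((ae_restrict_iff' measurableSet_Ioc).mpr (ae_of_all _ fun s _ => gI_nonneg s))).symm

lemma map_univ_mass (hV : 0 < Vstar I) :
    ((rhoI I).map (cvecI I)) Set.univ = ENNReal.ofReal (∫ s in IsetI I, gI I s) := by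
  rw [Measure.map_apply cvec_meas MeasurableSet.univ, Set.preimage_univ, rho_univ hV]

instance dirac_smul_finite : IsFiniteMeasure
    ((ENNReal.ofReal (w0I I)) • Measure.dirac (fun _ : Fin I.nK => (0:ℝ))) := by
  refine ⟨?_⟩
  rw [Measure.smul_apply, smul_eq_mul]
  exact ENNReal.mul_lt_top ENNReal.ofReal_lt_top (measure_lt_top _ _)

lemma map_finite (hV : 0 < Vstar I) : IsFiniteMeasure ((rhoI I).map (cvecI I)) := by
  refine ⟨?_⟩
  rw [map_univ_mass hV]
  exact ENNReal.ofReal_lt_top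

lemma muI_prob (hV : 0 < Vstar I) : IsProbabilityMeasure (muI I) := by
  refine ⟨?_⟩
  rw [muI, Measure.add_apply, map_univ_mass hV, Measure.smul_apply, smul_eq_mul,
    measure_univ, mul_one, ← ENNReal.ofReal_add int_gI_nonneg (w0_nonneg hV), w0I]
  norm_num

lemma map_integral {f : (Fin I.nK → ℝ) → ℝ} (hf : Measurable f) :
    ∫ v, f v ∂((rhoI I).map (cvecI I)) = ∫ s in IsetI I, gI I s * f (cvecI I s) := by
  rw [integral_map cvec_meas.aemeasurable hf.aestronglyMeasurable, rhoI]
  have hd : (fun s => ENNReal.ofReal (gI I s))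
      = (fun s => ((Real.toNNReal (gI I s) : ℝ≥0) : ℝ≥0∞)) := rfl
  rw [hd, integral_withDensity_eq_integral_smul
    (gI_meas.real_toNNReal) (fun s => f (cvecI I s))]
  refine integral_congr_ae (ae_of_all _ fun s => ?_)
  show (gI I s).toNNReal • f (cvecI I s) = gI I s * f (cvecI I s)
  rw [NNReal.smul_def, Real.coe_toNNReal _ (gI_nonneg s), smul_eq_mul]

lemma integrable_muI_parts (hV : 0 < Vstar I) {f : (Fin I.nK → ℝ) → ℝ}
    (hf : Measurable f) (C : ℝ) (hC : ∀ v, |f v| ≤ C) :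
    Integrable f ((rhoI I).map (cvecI I)) ∧
      Integrable f ((ENNReal.ofReal (w0I I)) • Measure.dirac (fun _ : Fin I.nK => (0:ℝ))) := by
  haveI := map_finite (I := I) hV
  exact ⟨integrable_of_bounded _ hf C hC, integrable_of_bounded _ hf C hC⟩

lemma spend_bound (hV : 0 < Vstar I) : spendD I (muI I) ≤ I.budget := by
  obtain ⟨hi1, hi2⟩ := integrable_muI_parts hV spendVec_measurable (CoMaxI I)
    (fun v => abs_le.mpr ⟨by linarith [spendVec_nonneg (I := I) v, CoMax_nonneg (I := I)],
      spendVec_le v⟩)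
  rw [spendD, muI, integral_add_measure hi1 hi2, integral_smul_measure, integral_dirac]
  have hz : spendVec I (fun _ => (0:ℝ)) = 0 := by
    rw [spendVec_const, cofun_nonpos le_rfl]
  rw [hz, smul_zero, add_zero, map_integral spendVec_measurable]
  have h1 : ∫ s in IsetI I, gI I s * spendVec I (cvecI I s) ≤ ∫ s in IsetI I, ufun I s := by
    refine setIntegral_mono_on ?_ (ufun_integrableOn _ _) measurableSet_Ioc ?_
    · refine Integrable.mono' (integrable_const ((aI I)⁻¹ * CoMaxI I))
        (gI_meas.mul (spendVec_measurable.comp cvec_meas)).aestronglyMeasurable ?_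
      refine (ae_restrict_iff' measurableSet_Ioc).mpr (ae_of_all _ fun s hs => ?_)
      rw [Real.norm_eq_abs, abs_of_nonneg (mul_nonneg (gI_nonneg s) (spendVec_nonneg _))]
      exact mul_le_mul (gI_le_ainv hV hs) (spendVec_le _) (spendVec_nonneg _)
        (inv_nonneg.mpr (le_of_lt (aI_pos hV)))
    · intro s hs
      obtain ⟨hs0, hsk⟩ := kfun_ufun_pos hV hs
      have hk0 : 0 < kfun I (ufun I s) := lt_of_lt_of_le hs0 hsk
      have hco : spendVec I (cvecI I s) ≤ kfun I (ufun I s) * ufun I s := by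
        rw [show spendVec I (cvecI I s) = cofun I (ufun I s) from spendVec_const _]
        exact cofun_le_mul (ufun_nonneg s)
      calc gI I s * spendVec I (cvecI I s)
          ≤ gI I s * (kfun I (ufun I s) * ufun I s) :=
            mul_le_mul_of_nonneg_left hco (gI_nonneg s)
        _ = ufun I s := by
            rw [gI, inv_mul_cancel_left₀ (ne_of_gt hk0)]
  have h2 : ∫ s in IsetI I, ufun I s ≤ ∫ s in Set.Ioc 0 (Vstar I), ufun I s := by
    refine setIntegral_mono_set (ufun_integrableOn _ _)
      (ae_of_all _ fun s => ufun_nonneg s) (HasSubset.Subset.eventuallyLE ?_)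
    exact Set.Ioc_subset_Ioc (le_of_lt (aI_pos hV)) le_rfl
  have h3 : Phi I (Vstar I) ≤ I.budget := Phi_Vstar_le_budget
  rw [Phi] at h3
  linarith

lemma traffic_bound (hV : 0 < Vstar I) :
    (1 - 1/Real.exp 1) * Vstar I ≤ trafficD I (muI I) := by
  obtain ⟨hi1, hi2⟩ := integrable_muI_parts hV trafficVec_measurable (CmaxI I)
    (fun v => abs_le.mpr ⟨by linarith [trafficVec_nonneg (I := I) v, Cmax_nonneg (I := I)],
      trafficVec_le v⟩)
  rw [trafficD, muI, integral_add_measure hi1 hi2, integral_smul_measure, integral_dirac]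
  have hsecond : 0 ≤ (ENNReal.ofReal (w0I I)).toReal • trafficVec I (fun _ => (0:ℝ)) := by
    exact smul_nonneg ENNReal.toReal_nonneg (trafficVec_nonneg _)
  have hfirst : ∫ v, trafficVec I v ∂((rhoI I).map (cvecI I)) = Vstar I - aI I := by
    rw [map_integral trafficVec_measurable]
    have hone : ∀ s ∈ IsetI I, gI I s * trafficVec I (cvecI I s) = 1 := by
      intro s hs
      obtain ⟨hs0, hsk⟩ := kfun_ufun_pos hV hs
      have hk0 : kfun I (ufun I s) ≠ 0 := ne_of_gt (lt_of_lt_of_le hs0 hsk)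
      rw [show trafficVec I (cvecI I s) = kfun I (ufun I s) from trafficVec_const _,
        gI, inv_mul_cancel₀ hk0]
    rw [setIntegral_congr_fun IsetI_meas hone, setIntegral_const, IsetI,
      measureReal_def, Real.volume_Ioc, ENNReal.toReal_ofReal (by linarith [aI_lt hV]), smul_eq_mul, mul_one]
  rw [hfirst]
  have heq : (1 - 1/Real.exp 1) * Vstar I = Vstar I - aI I := by
    rw [aI]; ring
  linarith

lemma muI_uniform_ae : ∀ᵐ v ∂(muI I), ∃ x : ℝ, 0 ≤ x ∧ v = fun _ => x := by
  classical
  rcases isEmpty_or_nonempty (Fin I.nK) with h | h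
  · refine ae_of_all _ fun v => ⟨0, le_rfl, funext fun k => (h.false k).elim⟩
  · obtain ⟨k0⟩ := h
    set Gset : Set (Fin I.nK → ℝ) := {v | (∀ k, v k = v k0) ∧ 0 ≤ v k0} with hGdef
    have hGmeas : MeasurableSet Gset := by
      have h1 : Gset = (⋂ k, {v : Fin I.nK → ℝ | v k = v k0}) ∩ {v | 0 ≤ v k0} := by
        ext v
        simp [hGdef, Set.mem_iInter]
      rw [h1]
      exact (MeasurableSet.iInter fun k =>
        measurableSet_eq_fun (measurable_pi_apply k) (measurable_pi_apply k0)).inter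
        (measurableSet_le measurable_const (measurable_pi_apply k0))
    have hmem : ∀ v ∈ Gset, ∃ x : ℝ, 0 ≤ x ∧ v = fun _ => x := by
      rintro v ⟨hv1, hv2⟩
      exact ⟨v k0, hv2, funext fun k => hv1 k⟩
    have hcompl : muI I Gsetᶜ = 0 := by
      rw [muI, Measure.add_apply, Measure.smul_apply, smul_eq_mul]
      have hmap : ((rhoI I).map (cvecI I)) Gsetᶜ = 0 := by
        rw [Measure.map_apply cvec_meas hGmeas.compl]
        have : cvecI I ⁻¹' Gsetᶜ = ∅ := by
          ext s
          simp only [Set.mem_preimage, Set.mem_compl_iff, Set.mem_empty_iff_false,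
            iff_false, not_not]
          exact ⟨fun k => rfl, ufun_nonneg s⟩
        rw [this, measure_empty]
      have hdir : Measure.dirac (fun _ : Fin I.nK => (0:ℝ)) Gsetᶜ = 0 := by
        rw [Measure.dirac_apply' _ hGmeas.compl]
        have : (fun _ : Fin I.nK => (0:ℝ)) ∈ Gset := ⟨fun k => rfl, le_rfl⟩
        simp [this]
      rw [hmap, hdir, mul_zero, add_zero]
    have hae : ∀ᵐ v ∂(muI I), v ∈ Gset := by
      rw [ae_iff]
      exact hcompl
    exact hae.mono hmem

end Main

/-- There is a uniform strategy within budget whose traffic is at least a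
`(1 - 1/e)` fraction of the per-query optimum: for every random tuple of
nonnegative per-query bids whose expected total cost is within budget, the
strategy obtains at least a `(1 - 1/e)` fraction of its expected total clicks. -/
theorem uniform_one_minus_inv_e_approximation (I : BOInstance) :
    ∃ μ : Measure (Fin I.nK → ℝ),
      IsUniform I μ ∧ spendD I μ ≤ I.budget ∧
      ∀ ν : Measure (Fin I.nQ → ℝ), IsProbabilityMeasure ν →
        (∀ᵐ β ∂ν, ∀ q, 0 ≤ β q) →
        (∫ β, ∑ q, landCost (I.S q) (I.α q) (I.b q) (β q) ∂ν) ≤ I.budget →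
        (1 - 1 / Real.exp 1) *
            (∫ β, ∑ q, landClicks (I.S q) (I.α q) (I.b q) (β q) ∂ν) ≤
          trafficD I μ := by
  have hfact : (0:ℝ) ≤ 1 - 1/Real.exp 1 := by
    have h1 : (1:ℝ) ≤ Real.exp 1 := by nlinarith [Real.add_one_le_exp (1:ℝ)]
    have h2 : 1/Real.exp 1 ≤ 1 := by
      rw [div_le_one (Real.exp_pos 1)]; exact h1
    linarith
  by_cases hV : Vstar I ≤ 0
  · refine ⟨Measure.dirac (fun _ => (0:ℝ)), ⟨⟨inferInstance, ?_⟩, ?_⟩, ?_, ?_⟩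
    · rw [ae_dirac_eq]
      exact Filter.eventually_pure.mpr fun k => le_rfl
    · rw [ae_dirac_eq]
      exact Filter.eventually_pure.mpr ⟨0, le_rfl, rfl⟩
    · rw [spendD, integral_dirac, spendVec_const, cofun_nonpos le_rfl]
      exact I.budget_nonneg
    · intro ν hν hae hcost
      haveI := hν
      have hmem : (∫ β, Wfun I β ∂ν) ∈ OPTset I := ⟨ν, hν, hae, hcost, rfl⟩
      have hVν : (∫ β, Wfun I β ∂ν) ≤ Vstar I := le_csSup OPTset_bddAbove hmem
      have htraffic : trafficD I (Measure.dirac (fun _ : Fin I.nK => (0:ℝ)))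
          = kfun I 0 := by
        rw [trafficD, integral_dirac, trafficVec_const]
      rw [htraffic]
      have : (1 - 1/Real.exp 1) * (∫ β, Wfun I β ∂ν) ≤ 0 := by
        have := mul_le_mul_of_nonneg_left (le_trans hVν hV) hfact
        simpa using this
      exact le_trans this (kfun_nonneg 0)
  · push_neg at hV
    refine ⟨muI I, ⟨⟨muI_prob hV, ?_⟩, muI_uniform_ae⟩, spend_bound hV, ?_⟩
    · refine muI_uniform_ae.mono ?_
      rintro v ⟨x, hx0, rfl⟩
      exact fun k => hx0
    · intro ν hν hae hcost
      haveI := hν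
      have hmem : (∫ β, Wfun I β ∂ν) ∈ OPTset I := ⟨ν, hν, hae, hcost, rfl⟩
      have hVν : (∫ β, Wfun I β ∂ν) ≤ Vstar I := le_csSup OPTset_bddAbove hmem
      calc (1 - 1/Real.exp 1) * (∫ β, Wfun I β ∂ν)
          ≤ (1 - 1/Real.exp 1) * Vstar I := mul_le_mul_of_nonneg_left hVν hfact
        _ ≤ trafficD I (muI I) := traffic_bound hV
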